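/- For any two real diagonal N×N matrices Λ and Λ_o, both with non-increasing diagonal entries, and any orthogonal matrix V, one has ‖Λ − Λ_o‖_F ≤ ‖Λ − V Λ_o Vᵀ‖_F (a trace/rearrangement inequality: tr(Λ V Λ_o Vᵀ) ≤ tr(Λ Λ_o)). -/

import Mathlib

open Matrix

noncomputable def frobNorm {N : ℕ} (A : Matrix (Fin N) (Fin N) ℝ) : ℝ :=
  Real.sqrt (∑ i, ∑ j, (A i j) ^ 2)

noncomputable def del {N : ℕ} (a : Fin N → ℝ) (k : Fin N) : ℝ :=
  a k - (if h : (k : ℕ) + 1 < N then a ⟨(k : ℕ) + 1, h⟩ else 0)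

lemma sum_del {N : ℕ} (a : Fin N → ℝ) (i : Fin N) :
    ∑ k ∈ Finset.Ici i, del a k = a i := by
  classical
  set A : ℕ → ℝ := fun n => if h : n < N then a ⟨n, h⟩ else 0 with hA
  have hdel : ∀ k : Fin N, del a k = A k - A ((k : ℕ) + 1) := by
    intro k
    simp [del, hA, k.isLt]
  have h1 : ∑ k ∈ Finset.Ici i, del a k
      = ∑ k : Fin N, (if i ≤ k then A (k : ℕ) - A ((k : ℕ)+1) else 0) := by
    rw [show Finset.Ici i = Finset.univ.filter (fun k => i ≤ k) by ext k; simp,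
      Finset.sum_filter]
    apply Finset.sum_congr rfl
    intro k _
    split <;> simp_all [hdel]
  rw [h1]
  have h2 : ∑ k : Fin N, (if i ≤ k then A (k:ℕ) - A ((k : ℕ)+1) else 0)
      = ∑ n ∈ Finset.range N, (if (i:ℕ) ≤ n then A n - A (n+1) else 0) := by
    rw [← Fin.sum_univ_eq_sum_range (fun n => if (i:ℕ) ≤ n then A n - A (n+1) else 0) N]
    apply Finset.sum_congr rfl
    intro k _
    congr 1
  rw [h2]
  have h3 : ∑ n ∈ Finset.range N, (if (i:ℕ) ≤ n then A n - A (n+1) else 0)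
      = ∑ n ∈ Finset.Ico (i : ℕ) N, (A n - A (n+1)) := by
    rw [← Finset.sum_filter]
    apply Finset.sum_congr
    · apply Finset.ext; intro n; simp only [Finset.mem_filter, Finset.mem_range, Finset.mem_Ico]; tauto
    · intros; rfl
  rw [h3, Finset.sum_Ico_eq_sum_range]
  have h4 := Finset.sum_range_sub' (fun n => A ((i : ℕ) + n)) (N - (i : ℕ))
  beta_reduce at h4
  have h5 : ∀ n ∈ Finset.range (N - (i:ℕ)), A ((i:ℕ) + n) - A ((i:ℕ) + n + 1)
      = A ((i:ℕ) + n) - A ((i:ℕ) + (n + 1)) := by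
    intro n _; ring_nf
  rw [Finset.sum_congr rfl h5, h4]
  have hiN : (i : ℕ) + (N - (i : ℕ)) = N := by omega
  rw [hiN]
  simp [hA, i.isLt]

lemma ici_ite {N : ℕ} (f : Fin N → ℝ) (i : Fin N) :
    ∑ k ∈ Finset.Ici i, f k = ∑ k : Fin N, (if i ≤ k then f k else 0) := by
  rw [show Finset.Ici i = Finset.univ.filter (fun k => i ≤ k) by ext k; simp,
    Finset.sum_filter]

lemma iic_ite {N : ℕ} (f : Fin N → ℝ) (i : Fin N) :
    ∑ k ∈ Finset.Iic i, f k = ∑ k : Fin N, (if k ≤ i then f k else 0) := by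
  rw [show Finset.Iic i = Finset.univ.filter (fun k => k ≤ i) by ext k; simp,
    Finset.sum_filter]

lemma swap4 {N : ℕ} (F : Fin N → Fin N → Fin N → Fin N → ℝ) :
    ∑ i, ∑ j, ∑ k, ∑ l, F i j k l = ∑ k, ∑ l, ∑ i, ∑ j, F i j k l := by
  calc ∑ i, ∑ j, ∑ k, ∑ l, F i j k l
      = ∑ i, ∑ k, ∑ j, ∑ l, F i j k l :=
        Finset.sum_congr rfl fun i _ => Finset.sum_comm
    _ = ∑ k, ∑ i, ∑ j, ∑ l, F i j k l := Finset.sum_comm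
    _ = ∑ k, ∑ i, ∑ l, ∑ j, F i j k l :=
        Finset.sum_congr rfl fun k _ => Finset.sum_congr rfl fun i _ => Finset.sum_comm
    _ = ∑ k, ∑ l, ∑ i, ∑ j, F i j k l :=
        Finset.sum_congr rfl fun k _ => Finset.sum_comm

lemma expand {N : ℕ} (c : Fin N → Fin N → ℝ) (a b : Fin N → ℝ) :
    ∑ i, ∑ j, c i j * (a i * b j)
      = ∑ k, ∑ l, del a k * del b l * (∑ i ∈ Finset.Iic k, ∑ j ∈ Finset.Iic l, c i j) := by
  classical
  have lhs : ∑ i, ∑ j, c i j * (a i * b j)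
      = ∑ i, ∑ j, ∑ k, ∑ l,
          (if i ≤ k then (1:ℝ) else 0) * (if j ≤ l then (1:ℝ) else 0)
            * (del a k * del b l * c i j) := by
    apply Finset.sum_congr rfl; intro i _
    apply Finset.sum_congr rfl; intro j _
    rw [show a i * b j = (∑ k ∈ Finset.Ici i, del a k) * (∑ l ∈ Finset.Ici j, del b l) by
        rw [sum_del, sum_del],
      ici_ite, ici_ite, Finset.sum_mul_sum, Finset.mul_sum]
    apply Finset.sum_congr rfl; intro k _
    rw [Finset.mul_sum]
    apply Finset.sum_congr rfl; intro l _
    split_ifs <;> ring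
  have rhs : ∑ k, ∑ l, del a k * del b l * (∑ i ∈ Finset.Iic k, ∑ j ∈ Finset.Iic l, c i j)
      = ∑ k, ∑ l, ∑ i, ∑ j,
          (if i ≤ k then (1:ℝ) else 0) * (if j ≤ l then (1:ℝ) else 0)
            * (del a k * del b l * c i j) := by
    apply Finset.sum_congr rfl; intro k _
    apply Finset.sum_congr rfl; intro l _
    rw [show (∑ i ∈ Finset.Iic k, ∑ j ∈ Finset.Iic l, c i j)
        = ∑ i : Fin N, ∑ j : Fin N,
            (if i ≤ k then (1:ℝ) else 0) * (if j ≤ l then (1:ℝ) else 0) * c i j by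
      rw [iic_ite]
      apply Finset.sum_congr rfl; intro i _
      split_ifs with h
      · rw [iic_ite]
        apply Finset.sum_congr rfl; intro j _
        split_ifs <;> simp
      · rw [Finset.sum_eq_zero]; intro j _; split_ifs <;> simp]
    rw [Finset.mul_sum]
    apply Finset.sum_congr rfl; intro i _
    rw [Finset.mul_sum]
    apply Finset.sum_congr rfl; intro j _
    ring
  rw [lhs, rhs, swap4]

lemma iic_univ {N : ℕ} (k : Fin N) (hk : ¬ ((k:ℕ)+1 < N)) :
    Finset.Iic k = Finset.univ := by
  ext j
  simp only [Finset.mem_Iic, Finset.mem_univ, iff_true, Fin.le_def]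
  omega

lemma T_eval {N : ℕ} (k l : Fin N) :
    ∑ i ∈ Finset.Iic k, ∑ j ∈ Finset.Iic l, (if i = j then (1:ℝ) else 0)
      = ((Finset.Iic k ∩ Finset.Iic l).card : ℝ) := by
  have h1 : ∀ i : Fin N, ∑ j ∈ Finset.Iic l, (if i = j then (1:ℝ) else 0)
      = if i ∈ Finset.Iic l then (1:ℝ) else 0 := by
    intro i; rw [Finset.sum_ite_eq]
  rw [Finset.sum_congr rfl fun i _ => h1 i, Finset.sum_ite_mem]
  simp

lemma key {N : ℕ} (P : Fin N → Fin N → ℝ) (hP : ∀ i j, 0 ≤ P i j)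
    (hrow : ∀ i, ∑ j, P i j = 1) (hcol : ∀ j, ∑ i, P i j = 1)
    (a b : Fin N → ℝ) (ha : ∀ i j : Fin N, i ≤ j → a j ≤ a i)
    (hb : ∀ i j : Fin N, i ≤ j → b j ≤ b i) :
    ∑ i, ∑ j, P i j * (a i * b j) ≤ ∑ i, a i * b i := by
  classical
  have hid : ∑ i, a i * b i = ∑ i, ∑ j, (if i = j then (1:ℝ) else 0) * (a i * b j) := by
    apply Finset.sum_congr rfl; intro i _
    simp [ite_mul]
  rw [hid, expand, expand]
  apply Finset.sum_le_sum; intro k _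
  apply Finset.sum_le_sum; intro l _
  by_cases hk : (k:ℕ)+1 < N
  · by_cases hl : (l:ℕ)+1 < N
    · -- both deltas nonneg, S ≤ T
      have hak : 0 ≤ del a k := by
        simp only [del, hk, dif_pos]
        have := ha k ⟨(k:ℕ)+1, hk⟩ (by simp [Fin.le_def])
        linarith
      have hbl : 0 ≤ del b l := by
        simp only [del, hl, dif_pos]
        have := hb l ⟨(l:ℕ)+1, hl⟩ (by simp [Fin.le_def])
        linarith
      apply mul_le_mul_of_nonneg_left _ (mul_nonneg hak hbl)
      rw [T_eval]
      have hS1 : ∑ i ∈ Finset.Iic k, ∑ j ∈ Finset.Iic l, P i j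
          ≤ ((Finset.Iic k).card : ℝ) := by
        calc ∑ i ∈ Finset.Iic k, ∑ j ∈ Finset.Iic l, P i j
            ≤ ∑ i ∈ Finset.Iic k, ∑ j : Fin N, P i j := by
              apply Finset.sum_le_sum; intro i _
              exact Finset.sum_le_sum_of_subset_of_nonneg (Finset.subset_univ _)
                (fun j _ _ => hP i j)
          _ = ((Finset.Iic k).card : ℝ) := by
              rw [Finset.sum_congr rfl fun i _ => hrow i]; simp
      have hS2 : ∑ i ∈ Finset.Iic k, ∑ j ∈ Finset.Iic l, P i j
          ≤ ((Finset.Iic l).card : ℝ) := by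
        rw [Finset.sum_comm]
        calc ∑ j ∈ Finset.Iic l, ∑ i ∈ Finset.Iic k, P i j
            ≤ ∑ j ∈ Finset.Iic l, ∑ i : Fin N, P i j := by
              apply Finset.sum_le_sum; intro j _
              exact Finset.sum_le_sum_of_subset_of_nonneg (Finset.subset_univ _)
                (fun i _ _ => hP i j)
          _ = ((Finset.Iic l).card : ℝ) := by
              rw [Finset.sum_congr rfl fun j _ => hcol j]; simp
      have hcard : (Finset.Iic k ∩ Finset.Iic l).card
          = min (Finset.Iic k).card (Finset.Iic l).card := by
        rw [show Finset.Iic k ∩ Finset.Iic l = Finset.Iic (min k l) by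
          ext x; simp [le_min_iff]]
        rcases le_total k l with h | h
        · rw [min_eq_left h]
          have : (Finset.Iic k).card ≤ (Finset.Iic l).card :=
            Finset.card_le_card (Finset.Iic_subset_Iic.2 h)
          omega
        · rw [min_eq_right h]
          have : (Finset.Iic l).card ≤ (Finset.Iic k).card :=
            Finset.card_le_card (Finset.Iic_subset_Iic.2 h)
          omega
      rw [hcard]
      rcases min_choice (Finset.Iic k).card (Finset.Iic l).card with h | h <;> rw [h]
      · exact hS1
      · exact hS2
    · -- l is last: equality
      have hu := iic_univ l hl
      have h1 : ∀ i ∈ Finset.Iic k, ∑ j ∈ Finset.Iic l, P i j = 1 := by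
        intro i _; rw [hu]; exact hrow i
      have : ∑ i ∈ Finset.Iic k, ∑ j ∈ Finset.Iic l, P i j
          = ∑ i ∈ Finset.Iic k, ∑ j ∈ Finset.Iic l, (if i = j then (1:ℝ) else 0) := by
        rw [Finset.sum_congr rfl h1, T_eval, hu, Finset.inter_univ]
        simp
      rw [this]
  · -- k is last: equality
    have hu := iic_univ k hk
    have h1 : ∀ j ∈ Finset.Iic l, ∑ i ∈ Finset.Iic k, P i j = 1 := by
      intro j _; rw [hu]; exact hcol j
    have : ∑ i ∈ Finset.Iic k, ∑ j ∈ Finset.Iic l, P i j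
        = ∑ i ∈ Finset.Iic k, ∑ j ∈ Finset.Iic l, (if i = j then (1:ℝ) else 0) := by
      rw [Finset.sum_comm, Finset.sum_congr rfl h1, T_eval, hu, Finset.univ_inter]
      simp
    rw [this]


lemma trace_diag_mul {N : ℕ} (d : Fin N → ℝ) (A : Matrix (Fin N) (Fin N) ℝ) :
    Matrix.trace (Matrix.diagonal d * A) = ∑ i, d i * A i i := by
  simp [Matrix.trace, Matrix.diag, Matrix.mul_apply, Matrix.diagonal, ite_mul]

lemma trace_mul_transpose_self {N : ℕ} (A : Matrix (Fin N) (Fin N) ℝ) :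
    Matrix.trace (A * Aᵀ) = ∑ i, ∑ j, (A i j)^2 := by
  simp [Matrix.trace, Matrix.diag, Matrix.mul_apply, sq]

lemma trace_conj {N : ℕ} (Λo : Fin N → ℝ) (V : Matrix (Fin N) (Fin N) ℝ)
    (hV2 : Vᵀ * V = 1) :
    Matrix.trace ((V * Matrix.diagonal Λo * Vᵀ) * (V * Matrix.diagonal Λo * Vᵀ)ᵀ)
      = ∑ i, (Λo i)^2 := by
  have hMT : (V * Matrix.diagonal Λo * Vᵀ)ᵀ = V * Matrix.diagonal Λo * Vᵀ := by
    simp [Matrix.transpose_mul, Matrix.diagonal_transpose, Matrix.mul_assoc]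
  rw [hMT]
  rw [show (V * Matrix.diagonal Λo * Vᵀ) * (V * Matrix.diagonal Λo * Vᵀ)
      = V * (Matrix.diagonal Λo * ((Vᵀ * V) * (Matrix.diagonal Λo * Vᵀ))) by
    simp only [Matrix.mul_assoc]]
  rw [hV2, Matrix.one_mul, Matrix.trace_mul_comm]
  rw [show (Matrix.diagonal Λo * (Matrix.diagonal Λo * Vᵀ)) * V
      = Matrix.diagonal Λo * Matrix.diagonal Λo * (Vᵀ * V) by simp only [Matrix.mul_assoc]]
  rw [hV2, Matrix.mul_one]
  simp [Matrix.diagonal_mul_diagonal, Matrix.trace_diagonal, sq]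

/-- Rearrangement/trace inequality: for diagonal `Λ`, `Λ_o` with non-increasing
diagonals and any orthogonal `V`, `‖Λ − Λ_o‖_F ≤ ‖Λ − V Λ_o Vᵀ‖_F`,
equivalently `tr(Λ V Λ_o Vᵀ) ≤ tr(Λ Λ_o)`. -/
theorem diagonal_rearrangement_inequality {N : ℕ}
    (d Λo : Fin N → ℝ)
    (hd : ∀ i j : Fin N, i ≤ j → d j ≤ d i)
    (hΛo : ∀ i j : Fin N, i ≤ j → Λo j ≤ Λo i)
    (V : Matrix (Fin N) (Fin N) ℝ) (hV : V ∈ Matrix.orthogonalGroup (Fin N) ℝ) :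
    frobNorm (Matrix.diagonal d - Matrix.diagonal Λo) ≤
        frobNorm (Matrix.diagonal d - V * Matrix.diagonal Λo * Vᵀ) ∧
      Matrix.trace (Matrix.diagonal d * (V * Matrix.diagonal Λo * Vᵀ)) ≤
        Matrix.trace (Matrix.diagonal d * Matrix.diagonal Λo) := by
  classical
  have hV1 : V * Vᵀ = 1 := by
    have := (Matrix.mem_orthogonalGroup_iff (Fin N) ℝ).mp hV
    simpa using this
  have hV2 : Vᵀ * V = 1 := by
    have := (Matrix.mem_orthogonalGroup_iff' (Fin N) ℝ).mp hV
    simpa using this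
  set M : Matrix (Fin N) (Fin N) ℝ := V * Matrix.diagonal Λo * Vᵀ with hM
  -- row and column sums of squares
  have hrow : ∀ i, ∑ j, (V i j)^2 = 1 := by
    intro i
    have := congrFun (congrFun hV1 i) i
    simpa [Matrix.mul_apply, sq] using this
  have hcol : ∀ j, ∑ i, (V i j)^2 = 1 := by
    intro j
    have := congrFun (congrFun hV2 j) j
    simpa [Matrix.mul_apply, sq, mul_comm] using this
  -- trace of D * M as double sum
  have hMii : ∀ i, M i i = ∑ j, (V i j)^2 * Λo j := by
    intro i
    have h0 : M i i = ∑ j, (V i j * Λo j) * V i j := by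
      rw [hM, Matrix.mul_apply]
      apply Finset.sum_congr rfl
      intro j _
      rw [Matrix.mul_diagonal, Matrix.transpose_apply]
    rw [h0]
    exact Finset.sum_congr rfl fun j _ => by ring
  have htrDM : Matrix.trace (Matrix.diagonal d * M)
      = ∑ i, ∑ j, (V i j)^2 * (d i * Λo j) := by
    rw [trace_diag_mul]
    apply Finset.sum_congr rfl
    intro i _
    rw [hMii, Finset.mul_sum]
    apply Finset.sum_congr rfl
    intro j _
    ring
  have htrDD : Matrix.trace (Matrix.diagonal d * Matrix.diagonal Λo)
      = ∑ i, d i * Λo i := by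
    simp [Matrix.diagonal_mul_diagonal, Matrix.trace_diagonal]
  -- the key inequality
  have hkey : ∑ i, ∑ j, (V i j)^2 * (d i * Λo j) ≤ ∑ i, d i * Λo i :=
    key (fun i j => (V i j)^2) (fun i j => sq_nonneg _) hrow hcol d Λo hd hΛo
  have htr : Matrix.trace (Matrix.diagonal d * M)
      ≤ Matrix.trace (Matrix.diagonal d * Matrix.diagonal Λo) := by
    rw [htrDM, htrDD]; exact hkey
  refine ⟨?_, htr⟩
  -- Frobenius part
  unfold frobNorm
  apply Real.sqrt_le_sqrt
  have hrad1 : ∑ i, ∑ j, ((Matrix.diagonal d - Matrix.diagonal Λo) i j)^2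
      = ∑ i, ((d i)^2 - 2 * (d i * Λo i) + (Λo i)^2) := by
    apply Finset.sum_congr rfl
    intro i _
    rw [show (∑ j, ((Matrix.diagonal d - Matrix.diagonal Λo) i j)^2)
        = ∑ j, (if i = j then ((d i)^2 - 2 * (d i * Λo i) + (Λo i)^2) else 0) by
      apply Finset.sum_congr rfl
      intro j _
      by_cases h : i = j
      · subst h; simp [Matrix.sub_apply, Matrix.diagonal_apply_eq]; ring
      · simp [Matrix.sub_apply, Matrix.diagonal_apply_ne _ h, h]]
    rw [Finset.sum_ite_eq]
    simp
  have hD2 : ∑ i, ∑ j, ((Matrix.diagonal d : Matrix (Fin N) (Fin N) ℝ) i j)^2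
      = ∑ i, (d i)^2 := by
    apply Finset.sum_congr rfl
    intro i _
    rw [show (∑ j, ((Matrix.diagonal d : Matrix (Fin N) (Fin N) ℝ) i j)^2)
        = ∑ j, (if i = j then (d i)^2 else 0) by
      apply Finset.sum_congr rfl
      intro j _
      by_cases h : i = j
      · subst h; simp
      · simp [Matrix.diagonal_apply_ne _ h, h]]
    rw [Finset.sum_ite_eq]
    simp
  have hDM : ∑ i, ∑ j, ((Matrix.diagonal d : Matrix (Fin N) (Fin N) ℝ) i j) * M i j
      = Matrix.trace (Matrix.diagonal d * M) := by
    rw [trace_diag_mul]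
    apply Finset.sum_congr rfl
    intro i _
    rw [show (∑ j, ((Matrix.diagonal d : Matrix (Fin N) (Fin N) ℝ) i j) * M i j)
        = ∑ j, (if i = j then d i * M i i else 0) by
      apply Finset.sum_congr rfl
      intro j _
      by_cases h : i = j
      · subst h; simp
      · simp [Matrix.diagonal_apply_ne _ h, h]]
    rw [Finset.sum_ite_eq]
    simp
  have hM2 : ∑ i, ∑ j, (M i j)^2 = ∑ i, (Λo i)^2 := by
    rw [← trace_mul_transpose_self M, hM, trace_conj Λo V hV2]
  have hrad2 : ∑ i, ∑ j, ((Matrix.diagonal d - M) i j)^2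
      = ∑ i, (d i)^2 - 2 * Matrix.trace (Matrix.diagonal d * M) + ∑ i, (Λo i)^2 := by
    have expand2 : ∀ i j, ((Matrix.diagonal d - M) i j)^2
        = ((Matrix.diagonal d : Matrix (Fin N) (Fin N) ℝ) i j)^2
          - 2 * (((Matrix.diagonal d : Matrix (Fin N) (Fin N) ℝ) i j) * M i j)
          + (M i j)^2 := by
      intro i j
      simp [Matrix.sub_apply]
      ring
    calc ∑ i, ∑ j, ((Matrix.diagonal d - M) i j)^2
        = ∑ i, ∑ j, (((Matrix.diagonal d : Matrix (Fin N) (Fin N) ℝ) i j)^2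
          - 2 * (((Matrix.diagonal d : Matrix (Fin N) (Fin N) ℝ) i j) * M i j)
          + (M i j)^2) := by
          exact Finset.sum_congr rfl fun i _ => Finset.sum_congr rfl fun j _ => expand2 i j
      _ = (∑ i, ∑ j, ((Matrix.diagonal d : Matrix (Fin N) (Fin N) ℝ) i j)^2)
          - 2 * (∑ i, ∑ j, ((Matrix.diagonal d : Matrix (Fin N) (Fin N) ℝ) i j) * M i j)
          + ∑ i, ∑ j, (M i j)^2 := by
          simp only [Finset.sum_add_distrib, Finset.sum_sub_distrib, Finset.mul_sum]
      _ = ∑ i, (d i)^2 - 2 * Matrix.trace (Matrix.diagonal d * M) + ∑ i, (Λo i)^2 := by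
          rw [hD2, hDM, hM2]
  rw [hrad1, hrad2]
  have h1 : ∑ i, ((d i)^2 - 2 * (d i * Λo i) + (Λo i)^2)
      = ∑ i, (d i)^2 - 2 * (∑ i, d i * Λo i) + ∑ i, (Λo i)^2 := by
    simp only [Finset.sum_add_distrib, Finset.sum_sub_distrib, Finset.mul_sum]
  rw [h1]
  have := htr
  rw [htrDD] at this
  linarith
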